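/- arXiv:2208.04893 — 2 statements merged into one kernel-verified Lean document; each statement's English description precedes it below -/
import Mathlib

section
/- Let M be a matroid of rank k and let F be a stressed subset of M. The rank function of the relaxation Rel(M,F) is given by: rk'(A) = min(|A|, k) if |A ∩ F| ≥ rk(F)+1, and rk'(A) = rk_M(A) otherwise. -/
open Set

variable {α : Type*}

/-- The (natural-number valued) rank of a set `X` in a matroid `M`:
the maximum cardinality of an independent subset of `X`. -/
noncomputable def Matroid.nrk (M : Matroid α) (X : Set α) : ℕ :=
  sSup (Set.ncard '' {I | M.Indep I ∧ I ⊆ X})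

/-- The rank of the matroid `M`. -/
noncomputable def Matroid.nRank (M : Matroid α) : ℕ := M.nrk M.E

/-- The cusp of a subset `A` in a matroid `M` of rank `k`:
all `k`-element subsets `S` of the ground set with `|S ∩ A| ≥ rk A + 1`. -/
def Matroid.cusp (M : Matroid α) (A : Set α) : Set (Set α) :=
  {S | S ⊆ M.E ∧ S.ncard = M.nRank ∧ M.nrk A + 1 ≤ (S ∩ A).ncard}

/-- A subset `A` of a matroid `M` is stressed if both the restriction `M | A`
and the contraction `M / A` are uniform matroids; for a finite matroid this is
equivalent to the rank functions of the restriction and of the contraction being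
those of uniform matroids. -/
def Matroid.StressedSubset (M : Matroid α) (A : Set α) : Prop :=
  (∀ S ⊆ A, M.nrk S = min S.ncard (M.nrk A)) ∧
  (∀ Y ⊆ M.E \ A, M.nrk (A ∪ Y) = M.nrk A + min Y.ncard (M.nRank - M.nrk A))

namespace Matroid

variable {M : Matroid α} {I J X Y B : Set α}

lemma nrk_bddAbove (hfin : M.E.Finite) (X : Set α) :
    BddAbove (Set.ncard '' {I | M.Indep I ∧ I ⊆ X}) := by
  refine ⟨M.E.ncard, ?_⟩
  rintro n ⟨I, ⟨hI, -⟩, rfl⟩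
  exact ncard_le_ncard hI.subset_ground hfin

lemma le_nrk (hfin : M.E.Finite) (hI : M.Indep I) (hIX : I ⊆ X) : I.ncard ≤ M.nrk X :=
  le_csSup (M.nrk_bddAbove hfin X) ⟨I, ⟨hI, hIX⟩, rfl⟩

lemma nrk_le {n : ℕ} (h : ∀ I, M.Indep I → I ⊆ X → I.ncard ≤ n) : M.nrk X ≤ n := by
  refine csSup_le ⟨0, ∅, ⟨M.empty_indep, empty_subset X⟩, by simp⟩ ?_
  rintro m ⟨I, ⟨hI, hIX⟩, rfl⟩
  exact h I hI hIX

lemma IsBasis'.ncard_eq_nrk (hfin : M.E.Finite) (hI : M.IsBasis' I X) : I.ncard = M.nrk X := by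
  refine le_antisymm (le_nrk hfin hI.indep hI.subset) (nrk_le fun J hJ hJX => ?_)
  obtain ⟨J', hJ', hJJ'⟩ := hJ.subset_isBasis'_of_subset hJX
  have h1 : (M ↾ X).IsBase J' := isBase_restrict_iff'.2 hJ'
  have h2 : (M ↾ X).IsBase I := isBase_restrict_iff'.2 hI
  calc J.ncard ≤ J'.ncard := ncard_le_ncard hJJ' (hfin.subset hJ'.indep.subset_ground)
  _ = I.ncard := h1.ncard_eq_ncard_of_isBase h2

lemma exists_nrk (M : Matroid α) (hfin : M.E.Finite) (X : Set α) :
    ∃ I, M.Indep I ∧ I ⊆ X ∧ I.ncard = M.nrk X := by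
  obtain ⟨I, hI⟩ := M.exists_isBasis' X
  exact ⟨I, hI.indep, hI.subset, hI.ncard_eq_nrk hfin⟩

lemma nrk_mono (M : Matroid α) (hfin : M.E.Finite) (hXY : X ⊆ Y) : M.nrk X ≤ M.nrk Y := by
  obtain ⟨I, hI, hIX, hIcard⟩ := M.exists_nrk hfin X
  rw [← hIcard]
  exact le_nrk hfin hI (hIX.trans hXY)

lemma nrk_le_ncard (M : Matroid α) (hX : X.Finite) : M.nrk X ≤ X.ncard :=
  nrk_le fun _ hI hIX => ncard_le_ncard hIX hX

lemma indep_of_nrk (M : Matroid α) (hfin : M.E.Finite) (hXE : X ⊆ M.E)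
    (h : X.ncard ≤ M.nrk X) : M.Indep X := by
  obtain ⟨I, hI, hIX, hIcard⟩ := M.exists_nrk hfin X
  have hXI : I = X := eq_of_subset_of_ncard_le hIX (hIcard.symm ▸ h) (hfin.subset hXE)
  exact hXI ▸ hI

lemma IsBase.ncard_eq_nRank (hB : M.IsBase B) (hfin : M.E.Finite) : B.ncard = M.nRank :=
  hB.isBasis_ground.isBasis'.ncard_eq_nrk hfin

lemma nrk_submod (M : Matroid α) (hfin : M.E.Finite) (X Y : Set α) :
    M.nrk (X ∪ Y) + M.nrk (X ∩ Y) ≤ M.nrk X + M.nrk Y := by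
  obtain ⟨I, hI⟩ := M.exists_isBasis' (X ∩ Y)
  obtain ⟨J, hJ, hIJ⟩ := hI.indep.subset_isBasis'_of_subset
    (hI.subset.trans (inter_subset_left.trans subset_union_left))
  have hJfin : J.Finite := hfin.subset hJ.indep.subset_ground
  have hIeq : I = J ∩ (X ∩ Y) :=
    hI.eq_of_subset_indep (hJ.indep.subset inter_subset_left)
      (subset_inter hIJ hI.subset) inter_subset_right
  have h1 : (J ∩ X).ncard ≤ M.nrk X :=
    le_nrk hfin (hJ.indep.subset inter_subset_left) inter_subset_right
  have h2 : (J ∩ Y).ncard ≤ M.nrk Y :=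
    le_nrk hfin (hJ.indep.subset inter_subset_left) inter_subset_right
  have h3 : ((J ∩ X) ∩ (J ∩ Y)).ncard + ((J ∩ X) ∪ (J ∩ Y)).ncard
      = (J ∩ X).ncard + (J ∩ Y).ncard :=
    ncard_inter_add_ncard_union _ _ (hJfin.subset inter_subset_left)
      (hJfin.subset inter_subset_left)
  have e1 : (J ∩ X) ∩ (J ∩ Y) = J ∩ (X ∩ Y) := by ext x; simp; tauto
  have e2 : (J ∩ X) ∪ (J ∩ Y) = J := by
    rw [← inter_union_distrib_left]
    exact inter_eq_left.mpr hJ.subset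
  rw [e1, e2, ← hIeq] at h3
  have h4 : I.ncard = M.nrk (X ∩ Y) := hI.ncard_eq_nrk hfin
  have h5 : J.ncard = M.nrk (X ∪ Y) := hJ.ncard_eq_nrk hfin
  omega

end Matroid

/-- rank function of the relaxation `Rel(M,F)` of a stressed subset `F`:
`rk'(A) = min(|A|, k)` when `|A ∩ F| ≥ rk F + 1`, and `rk'(A) = rk_M(A)` otherwise. -/
theorem relaxation_rank (M M' : Matroid α) (hfin : M.E.Finite) {F : Set α}
    (hF : F ⊆ M.E) (hstr : M.StressedSubset F) (hE' : M'.E = M.E)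
    (hB : ∀ B, M'.IsBase B ↔ M.IsBase B ∨ B ∈ M.cusp F) {A : Set α} (hA : A ⊆ M.E) :
    (M.nrk F + 1 ≤ (A ∩ F).ncard → M'.nrk A = min A.ncard M.nRank) ∧
    ((A ∩ F).ncard ≤ M.nrk F → M'.nrk A = M.nrk A) := by
  obtain ⟨hs1, hs2⟩ := hstr
  set k := M.nRank with hk
  set r := M.nrk F with hr
  have hfin' : M'.E.Finite := hE' ▸ hfin
  have hAfin : A.Finite := hfin.subset hA
  have hrk : r ≤ k := M.nrk_mono hfin hF
  have hMM' : ∀ I, M.Indep I → M'.Indep I := fun I hI => by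
    obtain ⟨B, hBb, hIB⟩ := hI.exists_isBase_superset
    exact (((hB B).mpr (Or.inl hBb)).indep).subset hIB
  have L1 : ∀ S, S ⊆ M.E → (S ∩ F).ncard ≤ r → (S \ F).ncard ≤ k - r → M.Indep S := by
    intro S hSE h1 h2
    have hSfin := hfin.subset hSE
    have e1 : M.nrk (S ∩ F) = (S ∩ F).ncard := by
      rw [hs1 (S ∩ F) inter_subset_right]; exact min_eq_left h1
    have e2 : M.nrk (F ∪ (S \ F)) = r + (S \ F).ncard := by
      rw [hs2 (S \ F) (diff_subset_diff_left hSE), min_eq_left h2]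
    have hsub := M.nrk_submod hfin S F
    have e3 : S ∪ F = F ∪ (S \ F) := by
      rw [union_diff_self, union_comm]
    rw [e3, e2, e1] at hsub
    have e4 : M.nrk S ≤ S.ncard := M.nrk_le_ncard hSfin
    have e5 : (S ∩ F).ncard + (S \ F).ncard = S.ncard :=
      ncard_inter_add_ncard_diff_eq_ncard S F hSfin
    exact M.indep_of_nrk hfin hSE (by omega)
  constructor
  · intro hcard
    have hub : M'.nrk A ≤ min A.ncard k := by
      refine le_min (M'.nrk_le_ncard hAfin) (Matroid.nrk_le fun I hI hIA => ?_)
      obtain ⟨B, hBb, hIB⟩ := hI.exists_isBase_superset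
      have hBk : B.ncard = k := by
        rcases (hB B).1 hBb with h | h
        · exact h.ncard_eq_nRank hfin
        · exact h.2.1
      calc I.ncard ≤ B.ncard :=
            ncard_le_ncard hIB ((hE' ▸ hfin).subset hBb.subset_ground)
      _ = k := hBk
    refine le_antisymm hub ?_
    have hAFA : (A ∩ F).ncard ≤ A.ncard := ncard_le_ncard inter_subset_left hAfin
    by_cases hrk' : r + 1 ≤ k
    · have hm1 : r + 1 ≤ min A.ncard k := le_min (le_trans hcard hAFA) hrk'
      obtain ⟨T, hTsub, hTcard⟩ := Set.exists_subset_card_eq hcard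
      obtain ⟨S, hTS, hSA, hScard⟩ :=
        Set.exists_subsuperset_card_eq (hTsub.trans inter_subset_left)
          (by rw [hTcard]; exact hm1) (min_le_left _ _)
      have hkE : k ≤ M.E.ncard := by
        obtain ⟨B, hBb⟩ := M.exists_isBase
        have h := ncard_le_ncard hBb.subset_ground hfin
        rw [hBb.ncard_eq_nRank hfin] at h
        exact h
      obtain ⟨B, hSB, hBE, hBcard⟩ :=
        Set.exists_subsuperset_card_eq (hSA.trans hA)
          (by rw [hScard]; exact min_le_right _ _) hkE
      have hBcusp : B ∈ M.cusp F := by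
        refine ⟨hBE, hBcard, ?_⟩
        calc r + 1 = T.ncard := hTcard.symm
        _ ≤ (B ∩ F).ncard := ncard_le_ncard
              (subset_inter (hTS.trans hSB) (hTsub.trans inter_subset_right))
              ((hfin.subset hBE).subset inter_subset_left)
      have hSind : M'.Indep S := (((hB B).mpr (Or.inr hBcusp)).indep).subset hSB
      calc min A.ncard k = S.ncard := hScard.symm
      _ ≤ M'.nrk A := Matroid.le_nrk hfin' hSind hSA
    · have hrk2 : r = k := le_antisymm hrk (by omega)
      have h1 : M.nrk (A ∩ F) = k := by
        rw [hs1 (A ∩ F) inter_subset_right, hrk2]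
        exact min_eq_right (by omega)
      obtain ⟨I, hI, hIsub, hIcard⟩ := M.exists_nrk hfin (A ∩ F)
      have hmin : min A.ncard k = k := min_eq_right (by omega)
      rw [hmin]
      calc k = I.ncard := by rw [hIcard, h1]
      _ ≤ M'.nrk A := Matroid.le_nrk hfin' (hMM' I hI) (hIsub.trans inter_subset_left)
  · intro hcard
    refine le_antisymm (Matroid.nrk_le fun I hI hIA => ?_) ?_
    · have hIM : M.Indep I := by
        obtain ⟨B, hBb, hIB⟩ := hI.exists_isBase_superset
        rcases (hB B).1 hBb with h | h
        · exact h.indep.subset hIB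
        · obtain ⟨hBE, hBk, hBF⟩ := h
          refine L1 I (hIA.trans hA)
            (le_trans (ncard_le_ncard (inter_subset_inter_left F hIA)
              (hAfin.subset inter_subset_left)) hcard) ?_
          have hBfin := hfin.subset hBE
          have e1 : (B ∩ F).ncard + (B \ F).ncard = B.ncard :=
            ncard_inter_add_ncard_diff_eq_ncard B F hBfin
          have e2 : (I \ F).ncard ≤ (B \ F).ncard :=
            ncard_le_ncard (diff_subset_diff_left hIB) (hBfin.diff (t := F))
          omega
      exact Matroid.le_nrk hfin hIM hIA
    · obtain ⟨I, hI, hIsub, hIcard⟩ := M.exists_nrk hfin A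
      rw [← hIcard]
      exact Matroid.le_nrk hfin' (hMM' I hI) hIsub
end

section
/- Let M be a matroid of rank k on E with a stressed subset F of rank r, and let A ⊆ E satisfy |A ∩ F| ≥ r + 1. Then rk_M(A) = min(k, r + |A ∖ F|). -/
open Set

variable {α : Type*}

section Aux

variable {M : Matroid α} {I J X Y : Set α}

lemma Matroid.Indep.ncard_le_nrk (hfin : M.E.Finite) (hI : M.Indep I) (hIX : I ⊆ X) :
    I.ncard ≤ M.nrk X := by
  apply le_csSup
  · refine ⟨M.E.ncard, ?_⟩
    rintro n ⟨J, ⟨hJ, -⟩, rfl⟩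
    exact Set.ncard_le_ncard hJ.subset_ground hfin
  · exact ⟨I, ⟨hI, hIX⟩, rfl⟩

lemma Matroid.IsBasis'.nrk_eq (hfin : M.E.Finite) (hI : M.IsBasis' I X) :
    M.nrk X = I.ncard := by
  refine le_antisymm (csSup_le ⟨I.ncard, ⟨I, ⟨hI.indep, hI.subset⟩, rfl⟩⟩ ?_)
    (hI.indep.ncard_le_nrk hfin hI.subset)
  rintro n ⟨J, ⟨hJ, hJX⟩, rfl⟩
  by_contra hlt
  push_neg at hlt
  have hIf : I.Finite := hfin.subset hI.indep.subset_ground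
  have hJf : J.Finite := hfin.subset hJ.subset_ground
  have : I.encard < J.encard := by
    rw [← hIf.cast_ncard_eq, ← hJf.cast_ncard_eq]
    exact_mod_cast hlt
  obtain ⟨e, he, hins⟩ := hI.indep.augment hJ this
  exact hI.insert_not_indep ⟨hJX he.1, he.2⟩ hins

lemma Matroid.nrk_mono_s7 (M : Matroid α) (hfin : M.E.Finite) (hXY : X ⊆ Y) :
    M.nrk X ≤ M.nrk Y := by
  obtain ⟨I, hI⟩ := M.exists_isBasis' X
  rw [hI.nrk_eq hfin]
  exact hI.indep.ncard_le_nrk hfin (hI.subset.trans hXY)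

lemma Matroid.nrk_submod_s7 (M : Matroid α) (hfin : M.E.Finite) (hX : X ⊆ M.E) (hY : Y ⊆ M.E) :
    M.nrk (X ∪ Y) + M.nrk (X ∩ Y) ≤ M.nrk X + M.nrk Y := by
  obtain ⟨I, hI⟩ := M.exists_isBasis' (X ∩ Y)
  obtain ⟨J, hJ, hIJ⟩ := hI.indep.subset_isBasis_of_subset
    (hI.subset.trans (Set.inter_subset_left.trans Set.subset_union_left))
    (Set.union_subset hX hY)
  have hJf : J.Finite := hfin.subset hJ.indep.subset_ground
  have h1 : M.nrk (X ∪ Y) = J.ncard := hJ.isBasis'.nrk_eq hfin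
  have h2 : M.nrk (X ∩ Y) = I.ncard := hI.nrk_eq hfin
  have h3 : (J ∩ X).ncard ≤ M.nrk X :=
    (hJ.indep.subset Set.inter_subset_left).ncard_le_nrk hfin Set.inter_subset_right
  have h4 : (J ∩ Y).ncard ≤ M.nrk Y :=
    (hJ.indep.subset Set.inter_subset_left).ncard_le_nrk hfin Set.inter_subset_right
  have hcup : (J ∩ X) ∪ (J ∩ Y) = J := by
    rw [← Set.inter_union_distrib_left, Set.inter_eq_left.2 hJ.subset]
  have hcap : I ⊆ (J ∩ X) ∩ (J ∩ Y) := by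
    rw [← Set.inter_inter_distrib_left]
    exact Set.subset_inter hIJ hI.subset
  have key : J.ncard + I.ncard ≤ (J ∩ X).ncard + (J ∩ Y).ncard := by
    rw [← Set.ncard_union_add_ncard_inter (J ∩ X) (J ∩ Y) (hJf.inter_of_left X)
      (hJf.inter_of_left Y), hcup]
    exact add_le_add_right (Set.ncard_le_ncard hcap ((hJf.inter_of_left X).inter_of_left _)) _
  rw [h1, h2]
  exact key.trans (add_le_add h3 h4)

end Aux

/-- if `F` is a stressed subset of rank `r` of a rank-`k` matroid `M` and
`A ⊆ E` satisfies `|A ∩ F| ≥ r + 1`, then `rk_M(A) = min(k, r + |A ∖ F|)`. -/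
theorem rank_of_large_inter_stressed (M : Matroid α) (hfin : M.E.Finite) {F A : Set α}
    (hF : F ⊆ M.E) (hstr : M.StressedSubset F) (hA : A ⊆ M.E)
    (hint : M.nrk F + 1 ≤ (A ∩ F).ncard) :
    M.nrk A = min M.nRank (M.nrk F + (A \ F).ncard) := by
  set r := M.nrk F with hr
  set k := M.nRank with hk
  have hrk : r ≤ k := M.nrk_mono_s7 hfin hF
  -- rank of A ∩ F is r
  have hinter : M.nrk (A ∩ F) = r := by
    rw [hstr.1 (A ∩ F) Set.inter_subset_right, min_eq_right]
    omega
  -- rank of A ∪ F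
  have hAF : A \ F ⊆ M.E \ F := Set.diff_subset_diff_left hA
  have hunion : M.nrk (A ∪ F) = r + min (A \ F).ncard (k - r) := by
    have : F ∪ (A \ F) = A ∪ F := by
      rw [Set.union_diff_self, Set.union_comm]
    rw [← this, hstr.2 (A \ F) hAF]
  -- upper bound
  have hub : M.nrk A ≤ M.nrk (A ∪ F) := M.nrk_mono_s7 hfin Set.subset_union_left
  -- lower bound via submodularity
  have hlb : M.nrk (A ∪ F) ≤ M.nrk A := by
    have := M.nrk_submod_s7 hfin hA hF
    omega
  have hAeq : M.nrk A = r + min (A \ F).ncard (k - r) := by omega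
  rw [hAeq]
  omega
end
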